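/- Let T > 0, let N ≥ 1 be an integer, and let a ∈ ℝ, q ≥ 0, ε ∈ ℝ with ε ≥ q², and c ≥ 0. Then there exists a unique continuously differentiable function η : [0,T] → ℝ satisfying the closed-loop Riccati equation η'(t) = 2(a + q)·η(t) + (1 − 1/N²)·η(t)² + q² − ε for all t ∈ [0,T], with terminal condition η(T) = c. Moreover, this solution satisfies η(t) ≥ 0 for all t ∈ [0,T]. -/

import Mathlib

open Set Real

/-- `η` solves on `[0,T]` the Riccati ODE `η' = A·η + B·η² + C` with terminal
condition `η T = c`. -/
def SolvesRiccati (A B C T c : ℝ) (η : ℝ → ℝ) : Prop :=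
  (∀ t ∈ Set.Icc (0 : ℝ) T,
      HasDerivWithinAt η (A * η t + B * (η t) ^ 2 + C) (Set.Icc (0 : ℝ) T) t) ∧
    η T = c

theorem riccati_unique {A B C T c : ℝ} (hT : 0 < T) {η₁ η₂ : ℝ → ℝ}
    (h₁ : SolvesRiccati A B C T c η₁) (h₂ : SolvesRiccati A B C T c η₂) :
    Set.EqOn η₁ η₂ (Set.Icc 0 T) := by
  have hcont₁ : ContinuousOn η₁ (Icc 0 T) := fun t ht => (h₁.1 t ht).continuousWithinAt
  have hcont₂ : ContinuousOn η₂ (Icc 0 T) := fun t ht => (h₂.1 t ht).continuousWithinAt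
  obtain ⟨M₁, hM₁⟩ := isCompact_Icc.exists_bound_of_continuousOn hcont₁
  obtain ⟨M₂, hM₂⟩ := isCompact_Icc.exists_bound_of_continuousOn hcont₂
  set M : ℝ := max (max M₁ M₂) 0 with hM
  have hM0 : 0 ≤ M := le_max_right _ _
  set L : ℝ := |A| + 2 * |B| * M with hL
  have hL0 : 0 ≤ L := by positivity
  have hv : ∀ _t : ℝ, LipschitzOnWith L.toNNReal
      (fun y : ℝ => A * y + B * y ^ 2 + C) (Icc (-M) M) := by
    intro _t
    apply LipschitzOnWith.of_dist_le_mul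
    intro x hx y hy
    rw [Real.dist_eq, Real.dist_eq, Real.coe_toNNReal _ hL0]
    have hxy : A * x + B * x ^ 2 + C - (A * y + B * y ^ 2 + C)
        = (A + B * (x + y)) * (x - y) := by ring
    rw [hxy, abs_mul]
    have h1 : |A + B * (x + y)| ≤ L := by
      calc |A + B * (x + y)| ≤ |A| + |B| * |x + y| := by
            rw [← abs_mul]; exact abs_add_le _ _
        _ ≤ |A| + |B| * (2 * M) := by
            have : |x + y| ≤ 2 * M := by
              have := abs_le.mpr hx; have := abs_le.mpr hy
              rw [abs_le] at *
              constructor <;> nlinarith [hx.1, hx.2, hy.1, hy.2]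
            nlinarith [abs_nonneg B]
        _ = L := by rw [hL]; ring
    exact mul_le_mul_of_nonneg_right h1 (abs_nonneg _)
  have hmem : ∀ (η : ℝ → ℝ), (∀ x ∈ Icc (0:ℝ) T, ‖η x‖ ≤ max M₁ M₂) →
      ∀ t ∈ Ioc (0:ℝ) T, η t ∈ Icc (-M) M := by
    intro η hη t ht
    have := hη t ⟨ht.1.le, ht.2⟩
    rw [Real.norm_eq_abs] at this
    have : |η t| ≤ M := this.trans (le_max_left _ _)
    exact abs_le.mp this
  have hderiv : ∀ (η : ℝ → ℝ), (∀ t ∈ Icc (0:ℝ) T,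
      HasDerivWithinAt η (A * η t + B * (η t) ^ 2 + C) (Icc (0:ℝ) T) t) →
      ∀ t ∈ Ioc (0:ℝ) T,
        HasDerivWithinAt η (A * η t + B * (η t) ^ 2 + C) (Iic t) t := by
    intro η hη t ht
    refine (hη t ⟨ht.1.le, ht.2⟩).mono_of_mem_nhdsWithin ?_
    rw [mem_nhdsWithin]
    exact ⟨Ioi 0, isOpen_Ioi, ht.1, fun x hx => ⟨hx.1.le, hx.2.trans ht.2⟩⟩
  exact ODE_solution_unique_of_mem_Icc_left (fun t _ => hv t) hcont₁
    (hderiv η₁ h₁.1) (fun t ht => hmem η₁ (fun x hx => (hM₁ x hx).trans (le_max_left _ _)) t ht)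
    hcont₂ (hderiv η₂ h₂.1) (fun t ht => hmem η₂ (fun x hx => (hM₂ x hx).trans (le_max_right _ _)) t ht)
    (h₁.2.trans h₂.2.symm)

set_option maxHeartbeats 2000000 in
theorem riccati_exists {A B C T c : ℝ} (hB : 0 ≤ B) (hC : C ≤ 0) (hc : 0 ≤ c) :
    ∃ η : ℝ → ℝ, SolvesRiccati A B C T c η ∧ ∀ t ∈ Set.Icc (0 : ℝ) T, 0 ≤ η t := by
  by_cases h0 : C = 0 ∧ c = 0
  · -- constant zero solution
    refine ⟨fun _ => 0, ⟨fun t ht => ?_, h0.2.symm⟩, fun t ht => le_refl 0⟩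
    have : A * 0 + B * (0:ℝ) ^ 2 + C = 0 := by rw [h0.1]; ring
    rw [this]
    exact (hasDerivWithinAt_const t _ 0)
  by_cases hB0 : B = 0
  · subst hB0
    by_cases hA : A = 0
    · subst hA
      refine ⟨fun t => c + C * (t - T), ⟨fun t ht => ?_, by ring⟩, fun t ht => ?_⟩
      · have h : HasDerivAt (fun t : ℝ => c + C * (t - T)) C t := by
          simpa using (((hasDerivAt_id t).sub_const T).const_mul C).const_add c
        have : (0:ℝ) * (c + C * (t - T)) + 0 * (c + C * (t - T)) ^ 2 + C = C := by ring
        rw [this]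
        exact h.hasDerivWithinAt
      · show 0 ≤ c + C * (t - T)
        nlinarith [ht.2, mul_nonneg (neg_nonneg.mpr hC) (sub_nonneg.mpr ht.2)]
    · refine ⟨fun t => (c + C / A) * Real.exp (A * (t - T)) - C / A,
        ⟨fun t ht => ?_, by simp⟩, fun t ht => ?_⟩
      · have h : HasDerivAt (fun t : ℝ => (c + C / A) * Real.exp (A * (t - T)) - C / A)
            ((c + C / A) * (A * Real.exp (A * (t - T)))) t := by
          have he : HasDerivAt (fun t : ℝ => Real.exp (A * (t - T)))
              (Real.exp (A * (t - T)) * A) t := by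
            simpa using (((hasDerivAt_id t).sub_const T).const_mul A).exp
          simpa [mul_comm, mul_left_comm] using (he.const_mul (c + C / A)).sub_const (C / A)
        refine h.hasDerivWithinAt.congr_deriv (Eq.symm ?_)
        field_simp
        ring
      · show 0 ≤ (c + C / A) * Real.exp (A * (t - T)) - C / A
        set E := Real.exp (A * (t - T)) with hE
        have hE0 : 0 < E := Real.exp_pos _
        have key : (c + C / A) * E - C / A = c * E + (C / A) * (E - 1) := by ring
        rw [key]
        rcases lt_or_gt_of_ne hA with hA' | hA'
        · have hE1 : 1 ≤ E := by
            rw [hE]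
            apply Real.one_le_exp
            nlinarith [ht.2]
          have : 0 ≤ C / A := by
            rw [div_nonneg_iff]; right; exact ⟨hC, hA'.le⟩
          nlinarith
        · have hE1 : E ≤ 1 := by
            rw [hE]
            apply Real.exp_le_one_iff.mpr
            nlinarith [ht.2]
          have : C / A ≤ 0 := div_nonpos_of_nonpos_of_nonneg hC hA'.le
          nlinarith
  · -- B > 0
    have hBpos : 0 < B := lt_of_le_of_ne hB (Ne.symm hB0)
    have hD : 0 ≤ A ^ 2 - 4 * B * C := by nlinarith [sq_nonneg A]
    set sd := Real.sqrt (A ^ 2 - 4 * B * C) with hsd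
    have hsd2 : sd ^ 2 = A ^ 2 - 4 * B * C := Real.sq_sqrt hD
    have hsd0 : 0 ≤ sd := Real.sqrt_nonneg _
    by_cases hsdz : sd = 0
    · -- A = 0, C = 0, c > 0
      have hD0 : A ^ 2 - 4 * B * C = 0 := by nlinarith [hsd2]
      have hA : A = 0 := by nlinarith [sq_nonneg A]
      have hC0 : C = 0 := by nlinarith
      have hcpos : 0 < c := by
        rcases lt_or_eq_of_le hc with h | h
        · exact h
        · exact absurd ⟨hC0, h.symm⟩ h0
        
      refine ⟨fun t => c / (1 + B * c * (T - t)), ⟨fun t ht => ?_, by simp⟩, fun t ht => ?_⟩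
      · have hd : 0 < 1 + B * c * (T - t) := by nlinarith [ht.2, mul_pos hBpos hcpos]
        have h : HasDerivAt (fun t : ℝ => c / (1 + B * c * (T - t)))
            ((0 * (1 + B * c * (T - t)) - c * (-(B * c))) / (1 + B * c * (T - t)) ^ 2) t := by
          have hden : HasDerivAt (fun t : ℝ => 1 + B * c * (T - t)) (-(B * c)) t := by
            simpa using (((hasDerivAt_id t).const_sub T).const_mul (B * c)).const_add 1
          exact (hasDerivAt_const t c).div hden hd.ne'
        refine h.hasDerivWithinAt.congr_deriv (Eq.symm ?_)
        rw [hA, hC0]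
        field_simp
        ring
      · have hd : 0 < 1 + B * c * (T - t) := by nlinarith [ht.2, mul_pos hBpos hcpos]
        positivity
    · -- main case: sd > 0
      have hsdp : 0 < sd := lt_of_le_of_ne hsd0 (Ne.symm hsdz)
      set p := (-A + sd) / (2 * B) with hp
      set m := (-A - sd) / (2 * B) with hm
      have hAsd : |A| ≤ sd := by
        rw [← Real.sqrt_sq_eq_abs, hsd]
        apply Real.sqrt_le_sqrt
        nlinarith
      have hpn : 0 ≤ p := by
        apply div_nonneg _ (by linarith)
        have := abs_le.mp (le_refl |A|)
        have := neg_abs_le A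
        linarith [hAsd, neg_abs_le A, le_abs_self A]
      have hmn : m ≤ 0 := by
        apply div_nonpos_of_nonpos_of_nonneg _ (by linarith)
        linarith [hAsd, neg_abs_le A]
      have hpm : m < p := by
        rw [hp, hm]
        exact (div_lt_div_iff_of_pos_right (by linarith : (0:ℝ) < 2 * B)).mpr (by linarith)
      have hcm : 0 < c - m := by
        rcases lt_or_eq_of_le hC with hClt | hCeq
        · have hmneg : m < 0 := by
            rw [hm]
            apply div_neg_of_neg_of_pos _ (by linarith)
            have h1 : A ^ 2 < sd ^ 2 := by nlinarith
            have h2 : |A| < sd := by nlinarith [abs_nonneg A, sq_abs A]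
            linarith [neg_abs_le A]
          linarith
        · have hcne : c ≠ 0 := fun h => h0 ⟨hCeq, h⟩
          have : 0 < c := lt_of_le_of_ne hc (Ne.symm hcne)
          linarith
      set u := (c - p) / (c - m) with hu
      have hueq : u * (c - m) = c - p := div_mul_cancel₀ _ hcm.ne'
      have hu1 : u < 1 := by rw [hu, div_lt_one hcm]; linarith
      have hA' : A = -(B * (p + m)) := by rw [hp, hm]; field_simp; ring
      have hC' : C = B * (p * m) := by
        have hpmv : p * m = (A ^ 2 - sd ^ 2) / (4 * B ^ 2) := by
          rw [hp, hm]; field_simp; ring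
        rw [hpmv, hsd2]
        field_simp
        ring
      have hsd' : sd = B * (p - m) := by rw [hp, hm]; field_simp; ring
      clear hp hm hu hsd2 hAsd hD hsdz hsd
      clear_value sd p m u
      refine ⟨fun t => (p - m * u * Real.exp (sd * (t - T))) /
          (1 - u * Real.exp (sd * (t - T))), ⟨fun t ht => ?_, ?_⟩, fun t ht => ?_⟩
      · set e := Real.exp (sd * (t - T)) with he
        have he0 : 0 < e := Real.exp_pos _
        have he1 : e ≤ 1 := by
          rw [he]
          apply Real.exp_le_one_iff.mpr
          exact mul_nonpos_of_nonneg_of_nonpos hsd0 (by linarith [ht.2])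
        have hd : 0 < 1 - u * e := by
          rcases le_or_gt u 0 with h | h
          · nlinarith
          · nlinarith
        have hE : HasDerivAt (fun t : ℝ => Real.exp (sd * (t - T))) (sd * e) t := by
          simpa [mul_comm] using (((hasDerivAt_id t).sub_const T).const_mul sd).exp
        have hnum : HasDerivAt (fun t : ℝ => p - m * u * Real.exp (sd * (t - T)))
            (-(m * u * (sd * e))) t := by
          simpa [mul_assoc] using (hE.const_mul (m * u)).const_sub p
        have hden : HasDerivAt (fun t : ℝ => 1 - u * Real.exp (sd * (t - T)))
            (-(u * (sd * e))) t := by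
          simpa using (hE.const_mul u).const_sub 1
        have h := hnum.div hden hd.ne'
        refine h.hasDerivWithinAt.congr_deriv (Eq.symm ?_)
        show A * ((p - m * u * e) / (1 - u * e)) + B * ((p - m * u * e) / (1 - u * e)) ^ 2 + C
            = _
        rw [← he, hA', hC', hsd']
        field_simp
        ring
      · show (p - m * u * Real.exp (sd * (T - T))) / (1 - u * Real.exp (sd * (T - T))) = c
        rw [sub_self, mul_zero, Real.exp_zero, mul_one, mul_one]
        have h1u : (1 : ℝ) - u ≠ 0 := by linarith
        rw [div_eq_iff h1u]
        linear_combination hueq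
      · show 0 ≤ (p - m * u * Real.exp (sd * (t - T))) / (1 - u * Real.exp (sd * (t - T)))
        set e := Real.exp (sd * (t - T)) with he
        have he0 : 0 < e := Real.exp_pos _
        have he1 : e ≤ 1 := by
          rw [he]
          apply Real.exp_le_one_iff.mpr
          exact mul_nonpos_of_nonneg_of_nonpos hsd0 (by linarith [ht.2])
        have hd : 0 < 1 - u * e := by
          rcases le_or_gt u 0 with h | h
          · nlinarith
          · nlinarith
        apply div_nonneg _ hd.le
        have h5 : (p - m * (u * e)) * (c - m) = p * c + (-m) * e * c + (-m) * p * (1 - e) := by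
          linear_combination (-(m * e)) * hueq
        have h6 : 0 ≤ (p - m * (u * e)) * (c - m) := by
          rw [h5]
          have n1 : 0 ≤ p * c := mul_nonneg hpn hc
          have n2 : 0 ≤ (-m) * e * c :=
            mul_nonneg (mul_nonneg (neg_nonneg.mpr hmn) he0.le) hc
          have n3 : 0 ≤ (-m) * p * (1 - e) :=
            mul_nonneg (mul_nonneg (neg_nonneg.mpr hmn) hpn) (by linarith)
          linarith
        nlinarith [h6, hcm]

/-- Existence, uniqueness and nonnegativity of the solution of the closed-loop
Riccati equation `η'(t) = 2(a + q)·η(t) + (1 − 1/N²)·η(t)² + q² − ε`,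
`η(T) = c`, in the Carmona–Fouque–Sun systemic-risk model, under `ε ≥ q²`. -/
theorem closedLoop_riccati_existence_uniqueness_nonneg
    (T : ℝ) (hT : 0 < T) (N : ℕ) (hN : 1 ≤ N) (a q ε c : ℝ)
    (hq : 0 ≤ q) (hε : q ^ 2 ≤ ε) (hc : 0 ≤ c) :
    ∃ η : ℝ → ℝ,
      SolvesRiccati (2 * (a + q)) (1 - 1 / (N : ℝ) ^ 2) (q ^ 2 - ε) T c η ∧
      (∀ t ∈ Set.Icc (0 : ℝ) T, 0 ≤ η t) ∧
      (∀ η' : ℝ → ℝ,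
        SolvesRiccati (2 * (a + q)) (1 - 1 / (N : ℝ) ^ 2) (q ^ 2 - ε) T c η' →
        ∀ t ∈ Set.Icc (0 : ℝ) T, η' t = η t) := by
  have hN1 : (1 : ℝ) ≤ (N : ℝ) := by exact_mod_cast hN
  have hB : 0 ≤ 1 - 1 / (N : ℝ) ^ 2 := by
    have h1 : (1 : ℝ) ≤ (N : ℝ) ^ 2 := by nlinarith
    have h2 : 1 / (N : ℝ) ^ 2 ≤ 1 := by
      rw [div_le_one (by linarith)]; linarith
    linarith
  have hC : q ^ 2 - ε ≤ 0 := by linarith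
  obtain ⟨η, hsol, hnn⟩ := riccati_exists (A := 2 * (a + q)) (T := T) hB hC hc
  exact ⟨η, hsol, hnn, fun η' hη' t ht => riccati_unique hT hη' hsol ht⟩
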